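/- A multilinear polynomial f: {-1,1}^n → ℝ with at most s non-zero Fourier coefficients takes at most 2^s distinct values. -/

import Mathlib

open scoped Classical

/-- A multilinear polynomial on the Boolean cube with at most `s` non-zero
Fourier coefficients takes at most `2^s` distinct values. -/
theorem sparse_poly_at_most_two_pow_values (n s : ℕ) (c : Finset (Fin n) → ℝ)
    (hs : (Finset.univ.filter fun S : Finset (Fin n) => c S ≠ 0).card ≤ s) :
    ((Finset.univ : Finset (Fin n → Bool)).image
        (fun b => ∑ S : Finset (Fin n), c S * ∏ i ∈ S, (if b i then (1:ℝ) else -1))).card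
      ≤ 2 ^ s := by
  classical
  set T := Finset.univ.filter fun S : Finset (Fin n) => c S ≠ 0 with hT
  have hpm : ∀ (b : Fin n → Bool) (S : Finset (Fin n)),
      (∏ i ∈ S, (if b i then (1:ℝ) else -1)) = 1 ∨
      (∏ i ∈ S, (if b i then (1:ℝ) else -1)) = -1 := by
    intro b S
    refine Finset.prod_induction _ (fun x => x = 1 ∨ x = -1) ?_ (Or.inl rfl) ?_
    · rintro a b (rfl | rfl) (rfl | rfl) <;> norm_num
    · intro i _; by_cases h : b i <;> simp [h]
  set φ : (Fin n → Bool) → ({S // S ∈ T} → Bool) :=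
    fun b S => decide ((∏ i ∈ S.1, (if b i then (1:ℝ) else -1)) = 1) with hφ
  set Ψ : ({S // S ∈ T} → Bool) → ℝ :=
    fun h => ∑ S ∈ T.attach, c S.1 * (if h S then (1:ℝ) else -1) with hΨ
  have key : (fun b : Fin n → Bool =>
      ∑ S : Finset (Fin n), c S * ∏ i ∈ S, (if b i then (1:ℝ) else -1)) = Ψ ∘ φ := by
    funext b
    have h1 : (∑ S : Finset (Fin n), c S * ∏ i ∈ S, (if b i then (1:ℝ) else -1))
        = ∑ S ∈ T, c S * ∏ i ∈ S, (if b i then (1:ℝ) else -1) := by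
      refine (Finset.sum_subset (Finset.subset_univ T) ?_).symm
      intro S _ hS
      simp only [hT, Finset.mem_filter, Finset.mem_univ, true_and, not_not] at hS
      simp [hS]
    rw [h1, ← Finset.sum_attach T (fun S => c S * ∏ i ∈ S, (if b i then (1:ℝ) else -1))]
    refine Finset.sum_congr rfl ?_
    intro S _
    simp only [Function.comp, hΨ, hφ]
    congr 1
    rcases hpm b S.1 with h | h
    · simp [h]
    · rw [h]; norm_num
  rw [key, ← Finset.image_image]
  calc ((Finset.univ.image φ).image Ψ).card
      ≤ (Finset.univ.image φ).card := Finset.card_image_le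
    _ ≤ (Finset.univ : Finset ({S // S ∈ T} → Bool)).card := Finset.card_le_univ _
    _ = 2 ^ T.card := by
        rw [Finset.card_univ, Fintype.card_fun, Fintype.card_coe, Fintype.card_bool]
    _ ≤ 2 ^ s := Nat.pow_le_pow_right (by norm_num) hs
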